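/- The operator α_0 acts on the charge-m subspace F^(m) as multiplication by m: for every semi-infinite monomial φ of charge m, α_0(φ) = m·φ. -/

import Mathlib

open Finsupp

/-- A semi-infinite monomial: a strictly decreasing sequence `seq : ℕ → ℤ` such that
for some `m : ℤ` (its charge) one has `seq k = m - k` for all sufficiently large `k`. -/
structure SIM : Type where
  seq : ℕ → ℤ
  anti : StrictAnti seq
  ex_charge : ∃ m : ℤ, ∃ N : ℕ, ∀ k, N ≤ k → seq k = m - (k : ℤ)

/-- Full fermionic Fock space: the free `ℂ`-vector space on the set of all
semi-infinite monomials. -/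
abbrev FockF : Type := SIM →₀ ℂ

namespace SIM

/-- `φ` is a semi-infinite monomial of charge `m`. -/
def HasCharge (φ : SIM) (m : ℤ) : Prop := ∃ N : ℕ, ∀ k, N ≤ k → φ.seq k = m - (k : ℤ)

theorem exists_lt (φ : SIM) (j : ℤ) : ∃ n : ℕ, φ.seq n < j := by
  obtain ⟨m, N, hN⟩ := φ.ex_charge
  refine ⟨N + (m - j).toNat + 1, ?_⟩
  have h1 := hN (N + (m - j).toNat + 1) (by omega)
  omega

/-- The position at which `j` is inserted into `φ`: the least `n` with `φ.seq n < j`.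
If `i_s > j > i_{s+1}` this equals `s + 1`, and it equals `0` if `j > i_0`. -/
noncomputable def wedgePos (φ : SIM) (j : ℤ) : ℕ := Nat.find (φ.exists_lt j)

/-- The semi-infinite monomial obtained from `φ` by inserting `j` (assuming `j` does not
occur in `φ`). -/
noncomputable def insertSIM (φ : SIM) (j : ℤ) (hj : ∀ s, φ.seq s ≠ j) : SIM where
  seq k := if k < φ.wedgePos j then φ.seq k else if k = φ.wedgePos j then j else φ.seq (k - 1)
  anti := by
    have hs : φ.seq (φ.wedgePos j) < j := Nat.find_spec (φ.exists_lt j)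
    have hm : ∀ k, k < φ.wedgePos j → j < φ.seq k := by
      intro k hk
      have h1 := Nat.find_min (φ.exists_lt j) hk
      have h2 := hj k
      omega
    have ha : ∀ a b : ℕ, a < b → φ.seq b < φ.seq a := fun a b h => φ.anti h
    apply strictAnti_nat_of_succ_lt
    intro k
    try dsimp only
    rcases lt_trichotomy k (φ.wedgePos j) with hk | hk | hk
    · rcases Nat.lt_or_ge (k + 1) (φ.wedgePos j) with hk1 | hk1
      · rw [if_pos hk, if_pos hk1]
        exact ha k (k + 1) (by omega)
      · have hk1' : k + 1 = φ.wedgePos j := by omega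
        rw [if_pos hk, if_neg (by omega), if_pos hk1']
        exact hm k hk
    · rw [if_neg (by omega), if_neg (by omega), if_neg (by omega), if_pos hk,
        (by omega : k + 1 - 1 = k), hk]
      exact hs
    · rw [if_neg (by omega), if_neg (by omega), if_neg (by omega), if_neg (by omega),
        (by omega : k + 1 - 1 = k)]
      exact ha (k - 1) k (by omega)
  ex_charge := by
    obtain ⟨m, N, hN⟩ := φ.ex_charge
    refine ⟨m + 1, N + φ.wedgePos j + 1, fun k hk => ?_⟩
    try dsimp only
    rw [if_neg (by omega), if_neg (by omega)]
    have h3 := hN (k - 1) (by omega)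
    omega

/-- The semi-infinite monomial obtained from `φ` by deleting the entry in position `s`. -/
noncomputable def removeSIM (φ : SIM) (s : ℕ) : SIM where
  seq k := if k < s then φ.seq k else φ.seq (k + 1)
  anti := by
    apply strictAnti_nat_of_succ_lt
    intro k
    try dsimp only
    split_ifs <;> exact φ.anti (by omega)
  ex_charge := by
    obtain ⟨m, N, hN⟩ := φ.ex_charge
    refine ⟨m - 1, N + s, fun k hk => ?_⟩
    try dsimp only
    rw [if_neg (by omega)]
    have h3 := hN (k + 1) (by omega)
    omega

end SIM

open Classical in
/-- The wedging operator `ψ_j` on full fermionic Fock space.  On a basis element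
`φ = (i_0, i_1, ...)` it is `0` if `j = i_s` for some `s`, and otherwise it is
`(-1)^n` times the basis element obtained by inserting `j` in position `n`
(so `(-1)^{s+1}` when `i_s > j > i_{s+1}`, and `+1` when `j > i_0`). -/
noncomputable def psi (j : ℤ) : FockF →ₗ[ℂ] FockF :=
  Finsupp.lift FockF ℂ SIM fun φ =>
    if hj : ∀ s, φ.seq s ≠ j then
      ((-1 : ℂ) ^ (φ.wedgePos j)) • Finsupp.single (φ.insertSIM j hj) 1
    else 0

open Classical in
/-- The contracting operator `ψ_j^*` on full fermionic Fock space.  On a basis element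
`φ = (i_0, i_1, ...)` it is `0` if `j ≠ i_s` for all `s`, and `(-1)^s` times the basis
element obtained by deleting `i_s` if `j = i_s`. -/
noncomputable def psiStar (j : ℤ) : FockF →ₗ[ℂ] FockF :=
  Finsupp.lift FockF ℂ SIM fun φ =>
    if hj : ∃ s, φ.seq s = j then
      ((-1 : ℂ) ^ hj.choose) • Finsupp.single (φ.removeSIM hj.choose) 1
    else 0

open Classical in
/-- The free bosons `α_n` on full fermionic Fock space, defined on each basis vector `φ` by
`α_n φ = Σ_{j ∈ ℤ} ψ_j ψ_{j+n}^*(φ)` for `n ≠ 0` and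
`α_0 φ = Σ_{j > 0} ψ_j ψ_j^*(φ) − Σ_{j ≤ 0} ψ_j^* ψ_j(φ)` (all sums are finite). -/
noncomputable def alpha (n : ℤ) : FockF →ₗ[ℂ] FockF :=
  Finsupp.lift FockF ℂ SIM fun φ =>
    if n = 0 then
      (∑ᶠ (j : ℤ) (_ : 0 < j), psi j (psiStar j (Finsupp.single φ 1))) -
        ∑ᶠ (j : ℤ) (_ : j ≤ 0), psiStar j (psi j (Finsupp.single φ 1))
    else ∑ᶠ j : ℤ, psi j (psiStar (j + n) (Finsupp.single φ 1))


-- ===== auxiliary lemmas =====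

namespace SIM

lemma ext' {a b : SIM} (h : a.seq = b.seq) : a = b := by
  cases a; cases b; cases h; rfl

end SIM

lemma lift_single_eval (f : SIM → FockF) (φ : SIM) :
    Finsupp.lift FockF ℂ SIM f (Finsupp.single φ 1) = f φ := by
  simp [Finsupp.lift_apply, Finsupp.sum_single_index]

open Classical in
lemma psi_single (j : ℤ) (φ : SIM) :
    psi j (Finsupp.single φ 1) =
      if hj : ∀ s, φ.seq s ≠ j then
        ((-1 : ℂ) ^ (φ.wedgePos j)) • Finsupp.single (φ.insertSIM j hj) 1
      else 0 := by
  simp only [psi]; rw [lift_single_eval]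

open Classical in
lemma psiStar_single (j : ℤ) (φ : SIM) :
    psiStar j (Finsupp.single φ 1) =
      if hj : ∃ s, φ.seq s = j then
        ((-1 : ℂ) ^ hj.choose) • Finsupp.single (φ.removeSIM hj.choose) 1
      else 0 := by
  simp only [psiStar]; rw [lift_single_eval]

open Classical in
lemma alpha_zero_single (φ : SIM) :
    alpha 0 (Finsupp.single φ 1) =
      (∑ᶠ (j : ℤ) (_ : 0 < j), psi j (psiStar j (Finsupp.single φ 1))) -
        ∑ᶠ (j : ℤ) (_ : j ≤ 0), psiStar j (psi j (Finsupp.single φ 1)) := by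
  simp only [alpha]; rw [lift_single_eval]; simp

lemma remove_ne (φ : SIM) {j : ℤ} {s₀ : ℕ} (hs₀ : φ.seq s₀ = j) :
    ∀ t, (φ.removeSIM s₀).seq t ≠ j := by
  intro t
  have hinj := φ.anti.injective
  simp only [SIM.removeSIM]
  split_ifs with hlt
  · intro hc; have := hinj (hc.trans hs₀.symm); omega
  · intro hc; have := hinj (hc.trans hs₀.symm); omega

lemma wedgePos_remove (φ : SIM) {j : ℤ} {s₀ : ℕ} (hs₀ : φ.seq s₀ = j) :
    (φ.removeSIM s₀).wedgePos j = s₀ := by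
  rw [SIM.wedgePos, Nat.find_eq_iff]
  constructor
  · show (φ.removeSIM s₀).seq s₀ < j
    simp only [SIM.removeSIM]
    rw [if_neg (lt_irrefl s₀)]
    have := φ.anti (show s₀ < s₀ + 1 by omega)
    omega
  · intro k hk
    show ¬ (φ.removeSIM s₀).seq k < j
    simp only [SIM.removeSIM]
    rw [if_pos hk]
    have := φ.anti hk
    omega

lemma insert_remove (φ : SIM) {j : ℤ} {s₀ : ℕ} (hs₀ : φ.seq s₀ = j) :
    (φ.removeSIM s₀).insertSIM j (remove_ne φ hs₀) = φ := by
  apply SIM.ext'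
  funext k
  have hw := wedgePos_remove φ hs₀
  simp only [SIM.insertSIM]
  rw [hw]
  simp only [SIM.removeSIM]
  rcases lt_trichotomy k s₀ with hlt | heq | hgt
  · rw [if_pos hlt, if_pos hlt]
  · rw [if_neg (by omega), if_pos heq, heq, hs₀]
  · rw [if_neg (by omega), if_neg (by omega), if_neg (by omega)]
    congr 1
    omega

open Classical in
lemma psi_psiStar (φ : SIM) (j : ℤ) :
    psi j (psiStar j (Finsupp.single φ 1)) =
      if ∃ s, φ.seq s = j then Finsupp.single φ 1 else (0 : FockF) := by
  classical
  rw [psiStar_single]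
  split_ifs with hj
  · have hs₀ : φ.seq hj.choose = j := hj.choose_spec
    rw [map_smul, psi_single, dif_pos (remove_ne φ hs₀), wedgePos_remove φ hs₀,
      insert_remove φ hs₀, smul_smul, ← mul_pow, neg_mul_neg, one_mul, one_pow, one_smul]
  · rw [map_zero]

lemma insert_seq_wedgePos (φ : SIM) {j : ℤ} (hj : ∀ s, φ.seq s ≠ j) :
    (φ.insertSIM j hj).seq (φ.wedgePos j) = j := by
  simp [SIM.insertSIM]

lemma remove_insert (φ : SIM) {j : ℤ} (hj : ∀ s, φ.seq s ≠ j) :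
    (φ.insertSIM j hj).removeSIM (φ.wedgePos j) = φ := by
  apply SIM.ext'
  funext k
  simp only [SIM.removeSIM, SIM.insertSIM]
  rcases lt_or_ge k (φ.wedgePos j) with hlt | hge
  · rw [if_pos hlt, if_pos hlt]
  · rw [if_neg (by omega), if_neg (by omega), if_neg (by omega),
      Nat.add_sub_cancel]

open Classical in
lemma psiStar_psi (φ : SIM) (j : ℤ) :
    psiStar j (psi j (Finsupp.single φ 1)) =
      if ∀ s, φ.seq s ≠ j then Finsupp.single φ 1 else (0 : FockF) := by
  classical
  rw [psi_single]
  split_ifs with hj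
  · have hmem : ∃ s, (φ.insertSIM j hj).seq s = j := ⟨φ.wedgePos j, insert_seq_wedgePos φ hj⟩
    rw [map_smul, psiStar_single, dif_pos hmem]
    have hc : hmem.choose = φ.wedgePos j :=
      (φ.insertSIM j hj).anti.injective
        (hmem.choose_spec.trans (insert_seq_wedgePos φ hj).symm)
    rw [hc, remove_insert φ hj, smul_smul, ← mul_pow, neg_mul_neg, one_mul, one_pow, one_smul]
  · rw [map_zero]

/-- the operator `α_0` acts on the charge-`m` subspace `F^{(m)}` as
multiplication by `m`: for every semi-infinite monomial `φ` of charge `m`,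
`α_0(φ) = m · φ`. -/
theorem alpha_zero_charge (m : ℤ) (φ : SIM) (h : φ.HasCharge m) :
    alpha 0 (Finsupp.single φ 1) = (m : ℂ) • Finsupp.single φ 1 := by
  classical
  obtain ⟨N, hN⟩ := h
  have hv : (Finsupp.single φ 1 : FockF) ≠ 0 := by simp
  set K : ℕ := N + m.toNat with hK_def
  have hmK : m ≤ (K : ℤ) := by
    have h1 := Int.self_le_toNat m
    omega
  have hKseq : ∀ k, K ≤ k → φ.seq k = m - (k : ℤ) := fun k hk => hN k (by omega)
  have hK0 : ∀ k, K ≤ k → φ.seq k ≤ 0 := by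
    intro k hk
    have h1 := hKseq k hk
    have h2 : (K : ℤ) ≤ (k : ℤ) := by exact_mod_cast hk
    omega
  set A : Finset ℕ := (Finset.range K).filter (fun k => 0 < φ.seq k) with hA_def
  set B : Finset ℕ := (Finset.range K).filter (fun k => ¬ 0 < φ.seq k) with hB_def
  have hAB : A.card + B.card = K := by
    rw [hA_def, hB_def, Finset.card_filter_add_card_filter_not, Finset.card_range]
  set Tp : Finset ℤ := A.image φ.seq with hTp_def
  set Bimg : Finset ℤ := B.image φ.seq with hBimg_def
  set Ioc : Finset ℤ := Finset.Ioc ((m : ℤ) - K) 0 with hIoc_def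
  set Tm : Finset ℤ := Ioc \ Bimg with hTm_def
  have hinj := φ.anti.injective
  have hTp_mem : ∀ j : ℤ, j ∈ Tp ↔ (0 < j ∧ ∃ s, φ.seq s = j) := by
    intro j
    simp only [hTp_def, Finset.mem_image, hA_def, Finset.mem_filter, Finset.mem_range]
    constructor
    · rintro ⟨k, ⟨hkK, hkpos⟩, rfl⟩
      exact ⟨hkpos, k, rfl⟩
    · rintro ⟨hjpos, s, rfl⟩
      refine ⟨s, ⟨?_, hjpos⟩, rfl⟩
      by_contra hs
      have := hK0 s (by omega)
      omega
  have hBimg_sub : Bimg ⊆ Ioc := by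
    intro j hj
    simp only [hBimg_def, Finset.mem_image, hB_def, Finset.mem_filter, Finset.mem_range] at hj
    obtain ⟨k, ⟨hkK, hknp⟩, rfl⟩ := hj
    rw [hIoc_def, Finset.mem_Ioc]
    have h1 : φ.seq K = m - K := hKseq K le_rfl
    have h2 : φ.seq K < φ.seq k := φ.anti hkK
    omega
  have hTm_mem : ∀ j : ℤ, j ∈ Tm ↔ (j ≤ 0 ∧ ∀ s, φ.seq s ≠ j) := by
    intro j
    rw [hTm_def, Finset.mem_sdiff, hIoc_def, Finset.mem_Ioc]
    constructor
    · rintro ⟨⟨hlt, hle⟩, hnot⟩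
      refine ⟨hle, fun s hs => ?_⟩
      rcases lt_or_ge s K with hsK | hsK
      · refine hnot ?_
        rw [hBimg_def, Finset.mem_image]
        exact ⟨s, by
          rw [hB_def, Finset.mem_filter, Finset.mem_range]
          exact ⟨hsK, by omega⟩, hs⟩
      · have h1 := hKseq s hsK
        have h2 : (K : ℤ) ≤ (s : ℤ) := by exact_mod_cast hsK
        omega
    · rintro ⟨hle, hmiss⟩
      have hjgt : m - (K : ℤ) < j := by
        by_contra hc
        push_neg at hc
        have hk0 : (K : ℤ) ≤ m - j := by omega
        have hkK : K ≤ (m - j).toNat := by omega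
        have h1 := hKseq _ hkK
        have h2 : ((m - j).toNat : ℤ) = m - j := by omega
        refine hmiss (m - j).toNat ?_
        omega
      refine ⟨⟨hjgt, hle⟩, ?_⟩
      rw [hBimg_def, Finset.mem_image]
      rintro ⟨k, _, hk⟩
      exact hmiss k hk
  have hTp_card : Tp.card = A.card := Finset.card_image_of_injOn hinj.injOn
  have hBimg_card : Bimg.card = B.card := Finset.card_image_of_injOn hinj.injOn
  -- positive part
  have hpp : ∀ j : ℤ, psi j (psiStar j (Finsupp.single φ 1))
      = if ∃ s, φ.seq s = j then Finsupp.single φ 1 else 0 := psi_psiStar φ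
  have hsetP : {j : ℤ | 0 < j} ∩ Function.support
        (fun j : ℤ => psi j (psiStar j (Finsupp.single φ 1)))
      = (↑Tp : Set ℤ) ∩ Function.support
        (fun j : ℤ => psi j (psiStar j (Finsupp.single φ 1))) := by
    ext j
    simp only [Set.mem_inter_iff, Set.mem_setOf_eq, Function.mem_support, Finset.mem_coe]
    rw [hpp j]
    by_cases hj : ∃ s, φ.seq s = j
    · simp [hj, hv, hTp_mem j]
    · simp [hj, hTp_mem j]
  have eP : (∑ᶠ (j : ℤ) (_ : 0 < j), psi j (psiStar j (Finsupp.single φ 1)))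
      = Tp.card • Finsupp.single φ 1 := by
    have h1 : (∑ᶠ (j : ℤ) (_ : 0 < j), psi j (psiStar j (Finsupp.single φ 1)))
        = ∑ᶠ j ∈ {j : ℤ | 0 < j}, psi j (psiStar j (Finsupp.single φ 1)) := rfl
    rw [h1, finsum_mem_inter_support_eq _ _ _ hsetP, finsum_mem_coe_finset]
    calc ∑ j ∈ Tp, psi j (psiStar j (Finsupp.single φ 1))
        = ∑ _j ∈ Tp, Finsupp.single φ 1 := Finset.sum_congr rfl (fun j hj => by
          rw [hpp j, if_pos ((hTp_mem j).mp hj).2])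
      _ = Tp.card • Finsupp.single φ 1 := Finset.sum_const _
  -- negative part
  have hmm : ∀ j : ℤ, psiStar j (psi j (Finsupp.single φ 1))
      = if ∀ s, φ.seq s ≠ j then Finsupp.single φ 1 else 0 := psiStar_psi φ
  have hsetM : {j : ℤ | j ≤ 0} ∩ Function.support
        (fun j : ℤ => psiStar j (psi j (Finsupp.single φ 1)))
      = (↑Tm : Set ℤ) ∩ Function.support
        (fun j : ℤ => psiStar j (psi j (Finsupp.single φ 1))) := by
    ext j
    simp only [Set.mem_inter_iff, Set.mem_setOf_eq, Function.mem_support, Finset.mem_coe]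
    rw [hmm j]
    by_cases hj : ∀ s, φ.seq s ≠ j
    · simp [hj, hv, hTm_mem j]
    · simp [hj, hTm_mem j]
  have eM : (∑ᶠ (j : ℤ) (_ : j ≤ 0), psiStar j (psi j (Finsupp.single φ 1)))
      = Tm.card • Finsupp.single φ 1 := by
    have h1 : (∑ᶠ (j : ℤ) (_ : j ≤ 0), psiStar j (psi j (Finsupp.single φ 1)))
        = ∑ᶠ j ∈ {j : ℤ | j ≤ 0}, psiStar j (psi j (Finsupp.single φ 1)) := rfl
    rw [h1, finsum_mem_inter_support_eq _ _ _ hsetM, finsum_mem_coe_finset]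
    calc ∑ j ∈ Tm, psiStar j (psi j (Finsupp.single φ 1))
        = ∑ _j ∈ Tm, Finsupp.single φ 1 := Finset.sum_congr rfl (fun j hj => by
          rw [hmm j, if_pos ((hTm_mem j).mp hj).2])
      _ = Tm.card • Finsupp.single φ 1 := Finset.sum_const _
  -- assemble
  have hcard : (Tp.card : ℤ) - (Tm.card : ℤ) = m := by
    have h1 : Tm.card = Ioc.card - Bimg.card := Finset.card_sdiff_of_subset hBimg_sub
    have h2 : Ioc.card = ((0 : ℤ) - ((m : ℤ) - K)).toNat := Int.card_Ioc _ _
    have h3 : Bimg.card ≤ Ioc.card := Finset.card_le_card hBimg_sub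
    omega
  rw [alpha_zero_single, eP, eM]
  have h4 : (Tp.card : ℂ) - (Tm.card : ℂ) = (m : ℂ) := by
    rw [← hcard]
    push_cast
    ring
  rw [← Nat.cast_smul_eq_nsmul ℂ Tp.card, ← Nat.cast_smul_eq_nsmul ℂ Tm.card,
    ← sub_smul, h4]
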